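/- arXiv:2301.05488 — 2 statements merged into one kernel-verified Lean document; each statement's English description precedes it below -/
import Mathlib

section
/- For any contraction T on a complex Hilbert space H (i.e., ‖T‖ ≤ 1), the block operator matrix [[T, √(1−TT*)], [√(1−T*T), −T*]] acting on H × H is unitary. -/
open ContinuousLinearMap

/-- The block operator `[[A, B], [C, D]]` acting on the Hilbert space direct sum
`H ×₂ H` (modelled as `WithLp 2 (H × H)`), sending `(x, y)` to `(Ax + By, Cx + Dy)`. -/
noncomputable def blockOp {H : Type*} [NormedAddCommGroup H] [InnerProductSpace ℂ H]
    (A B C D : H →L[ℂ] H) : WithLp 2 (H × H) →L[ℂ] WithLp 2 (H × H) :=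
  ((WithLp.prodContinuousLinearEquiv 2 ℂ H H).symm :
      H × H →L[ℂ] WithLp 2 (H × H)) ∘L
    ((A ∘L ContinuousLinearMap.fst ℂ H H + B ∘L ContinuousLinearMap.snd ℂ H H).prod
      (C ∘L ContinuousLinearMap.fst ℂ H H + D ∘L ContinuousLinearMap.snd ℂ H H)) ∘L
    ((WithLp.prodContinuousLinearEquiv 2 ℂ H H) :
      WithLp 2 (H × H) →L[ℂ] H × H)

section Block

variable {H : Type*} [NormedAddCommGroup H] [InnerProductSpace ℂ H]

lemma blockOp_apply_fst (A B C D : H →L[ℂ] H) (x : WithLp 2 (H × H)) :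
    (blockOp A B C D x).fst = A x.fst + B x.snd := rfl

lemma blockOp_apply_snd (A B C D : H →L[ℂ] H) (x : WithLp 2 (H × H)) :
    (blockOp A B C D x).snd = C x.fst + D x.snd := rfl

omit [NormedAddCommGroup H] [InnerProductSpace ℂ H] in
lemma prodL2_ext {G : Type*} [NormedAddCommGroup G] [InnerProductSpace ℂ G]
    {x y : WithLp 2 (G × G)} (h1 : x.fst = y.fst) (h2 : x.snd = y.snd) : x = y :=
  congrArg (WithLp.toLp 2) (Prod.ext h1 h2)

lemma blockOp_comp (A B C D A' B' C' D' : H →L[ℂ] H) :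
    blockOp A B C D ∘L blockOp A' B' C' D' =
      blockOp (A ∘L A' + B ∘L C') (A ∘L B' + B ∘L D')
        (C ∘L A' + D ∘L C') (C ∘L B' + D ∘L D') := by
  ext x
  refine prodL2_ext ?_ ?_ <;>
    simp [blockOp_apply_fst, blockOp_apply_snd, map_add] <;> abel

lemma blockOp_mul (A B C D A' B' C' D' : H →L[ℂ] H) :
    blockOp A B C D * blockOp A' B' C' D' =
      blockOp (A * A' + B * C') (A * B' + B * D')
        (C * A' + D * C') (C * B' + D * D') :=
  blockOp_comp A B C D A' B' C' D'

lemma blockOp_one : blockOp (1 : H →L[ℂ] H) 0 0 1 = 1 := by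
  ext x
  exact prodL2_ext (by simp [blockOp_apply_fst]) (by simp [blockOp_apply_snd])

lemma blockOp_adjoint [CompleteSpace H] (A B C D : H →L[ℂ] H) :
    adjoint (blockOp A B C D) = blockOp (adjoint A) (adjoint C) (adjoint B) (adjoint D) := by
  symm
  rw [ContinuousLinearMap.eq_adjoint_iff]
  intro x y
  simp only [WithLp.prod_inner_apply, WithLp.ofLp_fst, WithLp.ofLp_snd, blockOp_apply_fst, blockOp_apply_snd,
    inner_add_left, inner_add_right, adjoint_inner_left]
  ring

end Block

section CFCLemmas

variable {K : Type*} [NormedAddCommGroup K] [InnerProductSpace ℂ K] [CompleteSpace K]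

lemma commute_cfc_aux (a x : K →L[ℂ] K) (ha : IsSelfAdjoint a)
    (h1 : Commute x a) (g : C(spectrum ℝ a, ℝ)) :
    Commute x (cfcHom ha g) := by
  have hcl : IsClosed {g : C(spectrum ℝ a, ℝ) | Commute x (cfcHom ha g)} := by
    simp only [Commute, SemiconjBy]
    exact isClosed_eq
      ((continuous_mul_left x).comp (cfcHom_isClosedEmbedding ha).continuous)
      ((continuous_mul_right x).comp (cfcHom_isClosedEmbedding ha).continuous)
  induction g using ContinuousMap.induction_on_of_compact with
  | const r =>
      have : (ContinuousMap.const (spectrum ℝ a) r) = algebraMap ℝ C(spectrum ℝ a, ℝ) r := rfl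
      rw [this, AlgHomClass.commutes]
      exact Algebra.commute_algebraMap_right r x
  | id => rw [cfcHom_id ha]; exact h1
  | star_id => rw [star_trivial, cfcHom_id ha]; exact h1
  | add f g hf hg => rw [map_add]; exact hf.add_right hg
  | mul f g hf hg => rw [map_mul]; exact hf.mul_right hg
  | frequently f hf =>
      exact hcl.closure_subset (mem_closure_iff_frequently.mpr hf)

lemma commute_cfc (a x : K →L[ℂ] K) (ha : IsSelfAdjoint a)
    (h1 : Commute x a) (f : ℝ → ℝ)
    (hf : ContinuousOn f (spectrum ℝ a)) :
    Commute x (cfc f a) := by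
  rw [cfc_apply f a ha hf]
  exact commute_cfc_aux a x ha h1 _

lemma cfc_sqrt_sq_eq (E : K →L[ℂ] K) (hE : E.IsPositive) :
    cfc Real.sqrt (E * E) = E := by
  have hsa : IsSelfAdjoint E := hE.isSelfAdjoint
  have hspec : ∀ t ∈ spectrum ℝ E, 0 ≤ t :=
    spectrum_nonneg_of_nonneg ((ContinuousLinearMap.nonneg_iff_isPositive E).mpr hE)
  have h1 : E * E = cfc (fun t : ℝ => t * t) E := by
    rw [cfc_mul _ _ E (by fun_prop) (by fun_prop), cfc_id' ℝ E]
  rw [h1, ← cfc_comp' Real.sqrt (fun t : ℝ => t * t) E (by fun_prop) (by fun_prop)]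
  calc cfc (fun t : ℝ => Real.sqrt (t * t)) E
      = cfc (fun t : ℝ => t) E := by
        apply cfc_congr
        intro t ht
        simp only []
        rw [Real.sqrt_mul_self (hspec t ht)]
    _ = E := cfc_id' ℝ E

end CFCLemmas

/-- Sz.-Nagy: for any contraction `T` on a complex Hilbert space `H`
(`‖T‖ ≤ 1`), the block operator `[[T, √(1−TT*)], [√(1−T*T), −T*]]` on `H × H` is unitary.
The square roots are encoded as the (unique) positive operators `S`, `R` with
`S² = 1 − TT*` and `R² = 1 − T*T`. -/
theorem szNagy_block_unitary
    {H : Type*} [NormedAddCommGroup H] [InnerProductSpace ℂ H] [CompleteSpace H]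
    (T S R : H →L[ℂ] H) (hT : ‖T‖ ≤ 1)
    (hS : S.IsPositive) (hS2 : S ∘L S = 1 - T ∘L adjoint T)
    (hR : R.IsPositive) (hR2 : R ∘L R = 1 - adjoint T ∘L T) :
    blockOp T S R (-(adjoint T)) ∈
      unitary (WithLp 2 (H × H) →L[ℂ] WithLp 2 (H × H)) := by
  have hS2' : S * S = 1 - T * adjoint T := hS2
  have hR2' : R * R = 1 - adjoint T * T := hR2
  set T' := adjoint T with hT'
  -- the diagonal positive operator E = diag(S, R) and the nilpotent X = [[0,T],[0,0]]
  set E : WithLp 2 (H × H) →L[ℂ] WithLp 2 (H × H) := blockOp S 0 0 R with hEdef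
  set X : WithLp 2 (H × H) →L[ℂ] WithLp 2 (H × H) := blockOp 0 T 0 0 with hXdef
  have hEsa : IsSelfAdjoint E := by
    rw [ContinuousLinearMap.isSelfAdjoint_iff', hEdef, blockOp_adjoint, map_zero,
      hS.isSelfAdjoint.adjoint_eq, hR.isSelfAdjoint.adjoint_eq]
  have hEpos : E.IsPositive := by
    refine ⟨hEsa.isSymmetric, fun x => ?_⟩
    have h1 := (RCLike.nonneg_iff.mp (hS.inner_nonneg_left x.fst)).1
    have h2 := (RCLike.nonneg_iff.mp (hR.inner_nonneg_left x.snd)).1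
    simp only [reApplyInnerSelf, hEdef, WithLp.prod_inner_apply, WithLp.ofLp_fst, WithLp.ofLp_snd, blockOp_apply_fst,
      blockOp_apply_snd, zero_apply, add_zero, zero_add, map_add]
    positivity
  have hE2 : E * E = blockOp (1 - T * T') 0 0 (1 - T' * T) := by
    rw [hEdef, blockOp_mul]
    simp only [mul_zero, zero_mul, add_zero, zero_add, hS2', hR2']
  have hXD : Commute X (E * E) := by
    rw [hE2, Commute, SemiconjBy, hXdef, blockOp_mul, blockOp_mul]
    simp only [mul_zero, zero_mul, add_zero, zero_add]
    congr 1
    noncomm_ring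
  have hXE : Commute X E := by
    have hEEsa : IsSelfAdjoint (E * E) := by
      rw [IsSelfAdjoint, star_mul, hEsa.star_eq]
    have := commute_cfc (E * E) X hEEsa hXD Real.sqrt
      (Real.continuous_sqrt.continuousOn)
    rwa [cfc_sqrt_sq_eq E hEpos] at this
  -- extract the intertwining relation T R = S T
  have hTR : T * R = S * T := by
    have heq : blockOp 0 (T * R) 0 0 = blockOp 0 (S * T) (0 : H →L[ℂ] H) 0 := by
      have h := hXE.eq
      rw [hXdef, hEdef, blockOp_mul, blockOp_mul] at h
      simpa only [mul_zero, zero_mul, add_zero, zero_add] using h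
    ext v
    have h' := congrArg (fun F : WithLp 2 (H × H) →L[ℂ] WithLp 2 (H × H) =>
      (F ((WithLp.equiv 2 (H × H)).symm (0, v))).fst) heq
    simpa [blockOp_apply_fst] using h'
  have hTS : T' * S = R * T' := by
    have h := congrArg (fun F : H →L[ℂ] H => adjoint F) hTR
    -- adjoint (T * R) = adjoint R * adjoint T
    have h1 : adjoint (T * R) = R * T' := by
      rw [show T * R = T ∘L R from rfl, adjoint_comp, hR.isSelfAdjoint.adjoint_eq, ← hT']; rfl
    have h2 : adjoint (S * T) = T' * S := by
      rw [show S * T = S ∘L T from rfl, adjoint_comp, hS.isSelfAdjoint.adjoint_eq, ← hT']; rfl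
    rw [h1, h2] at h
    exact h.symm
  -- now verify unitarity
  rw [Unitary.mem_iff]
  have hadj : star (blockOp T S R (-T')) = blockOp (adjoint T) R S (-T) := by
    rw [ContinuousLinearMap.star_eq_adjoint, blockOp_adjoint, hS.isSelfAdjoint.adjoint_eq,
      hR.isSelfAdjoint.adjoint_eq, map_neg, ← hT']
    congr 1
    rw [hT', adjoint_adjoint]
  constructor
  · rw [hadj, blockOp_mul]
    rw [show adjoint T = T' from rfl]
    have e1 : T' * T + R * R = 1 := by rw [hR2']; noncomm_ring
    have e2 : T' * S + R * -T' = 0 := by rw [hTS]; noncomm_ring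
    have e3 : S * T + -T * R = 0 := by rw [← hTR]; noncomm_ring
    have e4 : S * S + -T * -T' = 1 := by rw [hS2']; noncomm_ring
    rw [e1, e2, e3, e4, blockOp_one]
  · rw [hadj, blockOp_mul]
    rw [show adjoint T = T' from rfl]
    have e1 : T * T' + S * S = 1 := by rw [hS2']; noncomm_ring
    have e2 : T * R + S * -T = 0 := by rw [hTR]; noncomm_ring
    have e3 : R * T' + -T' * S = 0 := by rw [← hTS]; noncomm_ring
    have e4 : R * R + -T' * -T = 1 := by rw [hR2']; noncomm_ring
    rw [e1, e2, e3, e4, blockOp_one]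
end

section
/- Let M be a closed subspace of a complex Hilbert space H and V₀ : M → H a linear isometry. Then there exists a unitary operator U on H ⊗ ℂ² such that U(x ⊗ e₁) = (V₀ x) ⊗ e₁ for all x ∈ M, where e₁ is the first standard basis vector of ℂ². -/
open scoped InnerProductSpace

open ContinuousLinearMap in
/-- Lemma 1: let `M` be a closed subspace of a complex Hilbert space `H` and
`V₀ : M → H` a linear isometry.  Then there is a unitary `U` on `H ⊗ ℂ²` extending `V₀` in
the sense that `U (x ⊗ e₁) = (V₀ x) ⊗ e₁` for all `x ∈ M`.  Here `H ⊗ ℂ²` is modelled as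
the Hilbert space direct sum `WithLp 2 (H × H)` (isometrically isomorphic to the Hilbert
tensor product `H ⊗ ℂ²` via `x ⊗ e₁ + y ⊗ e₂ ↦ (x, y)`), so that `x ⊗ e₁ = (x, 0)`. -/
theorem isometry_extends_to_unitary_qubit
    {H : Type*} [NormedAddCommGroup H] [InnerProductSpace ℂ H] [CompleteSpace H]
    (M : Submodule ℂ H) (hM : IsClosed (M : Set H))
    (V₀ : M →ₗᵢ[ℂ] H) :
    ∃ U ∈ unitary (WithLp 2 (H × H) →L[ℂ] WithLp 2 (H × H)),
      ∀ x : M,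
        U ((WithLp.equiv 2 (H × H)).symm ((x : H), 0))
          = (WithLp.equiv 2 (H × H)).symm (V₀ x, 0) := by
  haveI : CompleteSpace M := hM.completeSpace_coe
  set P : H →L[ℂ] H := M.subtypeL ∘L M.orthogonalProjectionOnto with hPdef
  set T : H →L[ℂ] H := V₀.toContinuousLinearMap ∘L M.orthogonalProjectionOnto with hTdef
  have hPP : P ∘L P = P := by
    ext x; simp [hPdef, Submodule.orthogonalProjectionOnto_mem_subspace_eq_self,
      Submodule.starProjection_eq_self_iff]
  have hTP : T ∘L P = T := by
    ext x; simp [hTdef, hPdef, Submodule.orthogonalProjectionOnto_mem_subspace_eq_self,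
      Submodule.orthogonalProjectionOnto_starProjection_of_le le_rfl]
  have hTsT : adjoint T ∘L T = P := by
    ext x
    refine ext_inner_right ℂ fun y => ?_
    simp only [coe_comp', Function.comp_apply, adjoint_inner_left]
    rw [hTdef, hPdef]
    simp only [coe_comp', Function.comp_apply, LinearIsometry.coe_toContinuousLinearMap,
      LinearIsometry.inner_map_map, Submodule.inner_orthogonalProjectionOnto_eq_of_mem_left,
      Submodule.subtypeL_apply]
  have hPsa : adjoint P = P := by
    rw [← hTsT, adjoint_comp, adjoint_adjoint]
  have hPTs : P ∘L adjoint T = adjoint T := by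
    have := congrArg adjoint hTP
    rwa [adjoint_comp, hPsa] at this
  set Q : H →L[ℂ] H := T ∘L adjoint T with hQdef
  have hQsa : adjoint Q = Q := by
    rw [hQdef, adjoint_comp, adjoint_adjoint]
  have hQT : Q ∘L T = T := by
    rw [hQdef, comp_assoc, hTsT, hTP]
  have hTsQ : adjoint T ∘L Q = adjoint T := by
    rw [hQdef, ← comp_assoc, hTsT, hPTs]
  have hQQ : Q ∘L Q = Q := by
    rw [hQdef, ← comp_assoc, comp_assoc T (adjoint T) T, hTsT, hTP]
  -- pointwise versions
  have pPP : ∀ v, P (P v) = P v := fun v => ContinuousLinearMap.ext_iff.mp hPP v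
  have pTP : ∀ v, T (P v) = T v := fun v => ContinuousLinearMap.ext_iff.mp hTP v
  have pTsT : ∀ v, adjoint T (T v) = P v := fun v => ContinuousLinearMap.ext_iff.mp hTsT v
  have pPTs : ∀ v, P (adjoint T v) = adjoint T v := fun v => ContinuousLinearMap.ext_iff.mp hPTs v
  have pQT : ∀ v, Q (T v) = T v := fun v => ContinuousLinearMap.ext_iff.mp hQT v
  have pTsQ : ∀ v, adjoint T (Q v) = adjoint T v := fun v => ContinuousLinearMap.ext_iff.mp hTsQ v
  have pQQ : ∀ v, Q (Q v) = Q v := fun v => ContinuousLinearMap.ext_iff.mp hQQ v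
  have pTTs : ∀ v, T (adjoint T v) = Q v := fun v => rfl
  -- the block maps
  set B : H × H →L[ℂ] H × H := (T.coprod (1 - Q)).prod ((1 - P).coprod (-(adjoint T))) with hBdef
  set W : H × H →L[ℂ] H × H := ((adjoint T).coprod (1 - P)).prod ((1 - Q).coprod (-T)) with hWdef
  have hWB : W ∘L B = ContinuousLinearMap.id ℂ (H × H) := by
    refine ContinuousLinearMap.ext fun v => ?_
    refine Prod.ext ?_ ?_ <;>
      simp only [hBdef, hWdef, coe_comp', Function.comp_apply, prod_apply, coprod_apply,
        sub_apply, one_apply_eq_self, neg_apply, map_add, map_sub, map_neg, coe_id', id_eq,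
        pTsT, pTP, pPTs, pQT, pTsQ, pQQ, pPP, pTTs] <;>
      abel
  have hBW : B ∘L W = ContinuousLinearMap.id ℂ (H × H) := by
    refine ContinuousLinearMap.ext fun v => ?_
    refine Prod.ext ?_ ?_ <;>
      simp only [hBdef, hWdef, coe_comp', Function.comp_apply, prod_apply, coprod_apply,
        sub_apply, one_apply_eq_self, neg_apply, map_add, map_sub, map_neg, coe_id', id_eq,
        pTsT, pTP, pPTs, pQT, pTsQ, pQQ, pPP, pTTs] <;>
      abel
  set e : WithLp 2 (H × H) ≃L[ℂ] H × H := WithLp.prodContinuousLinearEquiv 2 ℂ H H with hedef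
  set U : WithLp 2 (H × H) →L[ℂ] WithLp 2 (H × H) :=
    (e.symm : (H × H) →L[ℂ] WithLp 2 (H × H)) ∘L B ∘L (e : WithLp 2 (H × H) →L[ℂ] H × H)
    with hUdef
  set U' : WithLp 2 (H × H) →L[ℂ] WithLp 2 (H × H) :=
    (e.symm : (H × H) →L[ℂ] WithLp 2 (H × H)) ∘L W ∘L (e : WithLp 2 (H × H) →L[ℂ] H × H)
    with hU'def
  have hPinner : ∀ a b : H, ⟪P a, b⟫_ℂ = ⟪a, P b⟫_ℂ := by
    intro a b; conv_lhs => rw [← hPsa]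
    rw [adjoint_inner_left]
  have hQinner : ∀ a b : H, ⟪Q a, b⟫_ℂ = ⟪a, Q b⟫_ℂ := by
    intro a b; conv_lhs => rw [← hQsa]
    rw [adjoint_inner_left]
  have hadj : U' = adjoint U := by
    rw [ContinuousLinearMap.eq_adjoint_iff]
    intro x y
    simp only [hUdef, hU'def, coe_comp', Function.comp_apply, ContinuousLinearEquiv.coe_coe,
      hedef, WithLp.prodContinuousLinearEquiv_apply, WithLp.prodContinuousLinearEquiv_symm_apply,
      WithLp.prod_inner_apply, WithLp.toLp_fst, WithLp.toLp_snd,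
      hBdef, hWdef, prod_apply, coprod_apply, sub_apply, one_apply_eq_self, neg_apply,
      inner_add_left, inner_add_right, inner_sub_left, inner_sub_right,
      inner_neg_left, inner_neg_right, adjoint_inner_left, adjoint_inner_right,
      WithLp.ofLp_fst, WithLp.ofLp_snd, hPinner, hQinner]
    ring
  have key : ∀ C D : H × H →L[ℂ] H × H, C ∘L D = ContinuousLinearMap.id ℂ (H × H) →
      ((e.symm : (H × H) →L[ℂ] WithLp 2 (H × H)) ∘L C ∘L (e : WithLp 2 (H × H) →L[ℂ] H × H)) ∘L
      ((e.symm : (H × H) →L[ℂ] WithLp 2 (H × H)) ∘L D ∘L (e : WithLp 2 (H × H) →L[ℂ] H × H)) = 1 := by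
    intro C D h
    refine ContinuousLinearMap.ext fun v => ?_
    have := ContinuousLinearMap.ext_iff.mp h (e v)
    simp only [coe_comp', Function.comp_apply, ContinuousLinearEquiv.coe_coe,
      ContinuousLinearEquiv.apply_symm_apply, one_apply_eq_self, coe_id', id_eq] at this ⊢
    rw [this, ContinuousLinearEquiv.symm_apply_apply]
  refine ⟨U, ?_, ?_⟩
  · rw [Unitary.mem_iff]
    constructor
    · rw [star_eq_adjoint, ← hadj, ContinuousLinearMap.mul_def, hU'def, hUdef]
      exact key W B hWB
    · rw [star_eq_adjoint, ← hadj, ContinuousLinearMap.mul_def, hUdef, hU'def]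
      exact key B W hBW
  · intro x
    have h1 : (e ((WithLp.equiv 2 (H × H)).symm ((x : H), 0))) = ((x : H), 0) := by
      simp [hedef]
    simp only [hUdef, coe_comp', Function.comp_apply, ContinuousLinearEquiv.coe_coe, h1]
    have h2 : B ((x : H), (0 : H)) = (V₀ x, 0) := by
      simp [hBdef, hTdef, hPdef, Submodule.orthogonalProjectionOnto_mem_subspace_eq_self]
    rw [h2]
    simp [hedef]
end
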